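/- In a path with n nodes all having threshold 1 and time bound λ, any single node given incentive 1 can (directly or indirectly) cause at most 2λ+1 nodes to be influenced within λ rounds; consequently any incentive function p with Influenced[p,λ] = V satisfies Σ_v p(v) ≥ ⌈n/(2λ+1)⌉. -/

import Mathlib

open Finset

/-- Path adjacency on ℕ: `u` and `v` are consecutive. -/
def pAdj (u v : ℕ) : Prop := u + 1 = v ∨ v + 1 = u

instance : DecidableRel pAdj := fun u v => by unfold pAdj; infer_instance

/-- Influence process on the node set `S` of a path, thresholds `t`, incentives `p`:
at round 0 exactly the nodes with `p v ≥ t v` are influenced; afterwards a node is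
influenced once the number of already influenced neighbours reaches `t v - p v`. -/
def infl (S : Finset ℕ) (t p : ℕ → ℕ) : ℕ → Finset ℕ
  | 0 => S.filter fun v => t v ≤ p v
  | ℓ + 1 => infl S t p ℓ ∪ S.filter fun v =>
      t v - p v ≤ ((infl S t p ℓ).filter fun u => pAdj u v).card

lemma infl_key (n : ℕ) (p : ℕ → ℕ) :
    ∀ ℓ w, w ∈ infl (range n) (fun _ => 1) p ℓ →
      ∃ v, v < n ∧ 1 ≤ p v ∧ v ≤ w + ℓ ∧ w ≤ v + ℓ := by
  intro ℓ
  induction ℓ with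
  | zero =>
    intro w hw
    simp only [infl, mem_filter, mem_range] at hw
    exact ⟨w, hw.1, hw.2, by omega, by omega⟩
  | succ ℓ ih =>
    intro w hw
    simp only [infl, mem_union, mem_filter, mem_range] at hw
    rcases hw with hw | ⟨hwn, hc⟩
    · obtain ⟨v, h1, h2, h3, h4⟩ := ih w hw
      exact ⟨v, h1, h2, by omega, by omega⟩
    · by_cases hpw : 1 ≤ p w
      · exact ⟨w, hwn, hpw, by omega, by omega⟩
      · have h1 : 1 ≤ ((infl (range n) (fun _ => 1) p ℓ).filter fun u => pAdj u w).card := by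
          omega
        obtain ⟨u, hu⟩ := card_pos.mp h1
        simp only [mem_filter] at hu
        obtain ⟨v, h1, h2, h3, h4⟩ := ih u hu.1
        rcases hu.2 with h | h
        · exact ⟨v, h1, h2, by omega, by omega⟩
        · exact ⟨v, h1, h2, by omega, by omega⟩

/-- on a path of `n` nodes all with threshold 1, a single node given
incentive 1 influences at most `2*lam+1` nodes within `lam` rounds; consequently any
incentive function covering the whole path costs at least `⌈n/(2lam+1)⌉`. -/
theorem path_single_seed_bound_and_lower_bound (n lam : ℕ) :
    (∀ v < n,
      (infl (range n) (fun _ => 1) (fun u => if u = v then 1 else 0) lam).card ≤ 2 * lam + 1)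
    ∧ ∀ p : ℕ → ℕ, (∀ v < n, p v ≤ 1) →
        infl (range n) (fun _ => 1) p lam = range n →
        (n + 2 * lam) / (2 * lam + 1) ≤ ∑ v ∈ range n, p v := by
  constructor
  · intro v hv
    have hsub : infl (range n) (fun _ => 1) (fun u => if u = v then 1 else 0) lam ⊆
        Icc (v - lam) (v + lam) := by
      intro w hw
      obtain ⟨u, h1, h2, h3, h4⟩ := infl_key n _ lam w hw
      have : u = v := by by_contra h; simp [h] at h2
      subst this
      simp only [mem_Icc]; omega
    calc _ ≤ (Icc (v - lam) (v + lam)).card := card_le_card hsub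
      _ ≤ 2 * lam + 1 := by rw [Nat.card_Icc]; omega
  · intro p hp hcov
    have hsub : range n ⊆ ((range n).filter fun v => 1 ≤ p v).biUnion
        fun v => Icc (v - lam) (v + lam) := by
      intro w hw
      rw [← hcov] at hw
      obtain ⟨v, h1, h2, h3, h4⟩ := infl_key n p lam w hw
      simp only [mem_biUnion, mem_filter, mem_range, mem_Icc]
      exact ⟨v, ⟨h1, h2⟩, by omega, by omega⟩
    have hn : n ≤ (2 * lam + 1) * ∑ v ∈ range n, p v := by
      have h1 : n ≤ ∑ v ∈ (range n).filter (fun v => 1 ≤ p v), (2 * lam + 1) := by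
        calc n = (range n).card := (card_range n).symm
          _ ≤ _ := card_le_card hsub
          _ ≤ ∑ v ∈ (range n).filter (fun v => 1 ≤ p v), (Icc (v - lam) (v + lam)).card :=
            card_biUnion_le
          _ ≤ _ := sum_le_sum fun v _ => by rw [Nat.card_Icc]; omega
      have h2 : ∑ v ∈ (range n).filter (fun v => 1 ≤ p v), (2 * lam + 1)
          ≤ (2 * lam + 1) * ∑ v ∈ range n, p v := by
        rw [sum_const, smul_eq_mul, mul_comm]
        refine Nat.mul_le_mul_left _ ?_
        calc ((range n).filter fun v => 1 ≤ p v).card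
            = ∑ v ∈ (range n).filter (fun v => 1 ≤ p v), 1 := by simp
          _ ≤ ∑ v ∈ (range n).filter (fun v => 1 ≤ p v), p v :=
            sum_le_sum fun v hv => (mem_filter.mp hv).2
          _ ≤ ∑ v ∈ range n, p v := sum_le_sum_of_subset (filter_subset _ _)
      omega
    rw [Nat.div_le_iff_le_mul_add_pred (by omega)]
    omega
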